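/- (McMillan inequality) Let C be a finite uniquely decodable code over an alphabet of size k ≥ 2. Then ∑_{w ∈ C} k^{-|w|} ≤ 1. -/

import Mathlib

def UniquelyDecodable {α : Type*} (C : Finset (List α)) : Prop :=
  ∀ l₁ l₂ : List (List α), (∀ w ∈ l₁, w ∈ C) → (∀ w ∈ l₂, w ∈ C) →
    l₁.flatten = l₂.flatten → l₁ = l₂

theorem stmt_4 {α : Type*} [Fintype α] [DecidableEq α]
    (k : ℕ) (hk : Fintype.card α = k) (hk2 : 2 ≤ k)
    (C : Finset (List α))
    (hne : ∀ w ∈ C, w ≠ [])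
    (hud : UniquelyDecodable C) :
    ∑ w ∈ C, ((k : ℝ) ^ w.length)⁻¹ ≤ 1 := by
  classical
  have hkpos : (0:ℝ) < k := by
    have : 0 < k := lt_of_lt_of_le (by norm_num) hk2
    exact_mod_cast this
  have hαne : Nonempty α := by
    rw [← Fintype.card_pos_iff, hk]; omega
  obtain ⟨a⟩ := hαne
  set S : ℝ := ∑ w ∈ C, ((k : ℝ) ^ w.length)⁻¹ with hS
  set L : ℕ := C.sup List.length with hLdef
  have hwL : ∀ w ∈ C, w.length ≤ L := fun w hw => Finset.le_sup hw
  -- cardinality bound for tuples with fixed total length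
  have card_bound : ∀ (n m : ℕ),
      ((Fintype.piFinset (fun _ : Fin n => C)).filter
        (fun f => ∑ i, (f i).length = m)).card ≤ k ^ m := by
    intro n m
    set T := ((Fintype.piFinset (fun _ : Fin n => C)).filter
        (fun f => ∑ i, (f i).length = m)) with hT
    have hlen : ∀ f ∈ T, ((List.ofFn f).flatten).length = m := by
      intro f hf
      rw [Finset.mem_filter] at hf
      rw [List.length_flatten]
      simp only [List.map_ofFn, List.sum_ofFn]
      exact hf.2
    have hinj : Set.InjOn (fun f => (fun i : Fin m => ((List.ofFn f).flatten).getD i a))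
        (T : Set (Fin n → List α)) := by
      intro f hf g hg hfg
      have hjoin : (List.ofFn f).flatten = (List.ofFn g).flatten := by
        apply List.ext_getElem
        · rw [hlen f hf, hlen g hg]
        · intro i h1 h2
          have hi : i < m := by rw [← hlen f hf]; exact h1
          have := congrFun hfg ⟨i, hi⟩
          simp only at this
          rwa [List.getD_eq_getElem _ a h1, List.getD_eq_getElem _ a h2] at this
      have hf' : ∀ w ∈ List.ofFn f, w ∈ C := by
        intro w hw
        rw [List.mem_ofFn] at hw
        obtain ⟨i, rfl⟩ := hw
        have := (Finset.mem_filter.mp hf).1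
        exact Fintype.mem_piFinset.mp this i
      have hg' : ∀ w ∈ List.ofFn g, w ∈ C := by
        intro w hw
        rw [List.mem_ofFn] at hw
        obtain ⟨i, rfl⟩ := hw
        have := (Finset.mem_filter.mp hg).1
        exact Fintype.mem_piFinset.mp this i
      have := hud (List.ofFn f) (List.ofFn g) hf' hg' hjoin
      exact List.ofFn_injective this
    calc T.card ≤ (Finset.univ : Finset (Fin m → α)).card :=
          Finset.card_le_card_of_injOn _ (fun _ _ => Finset.mem_univ _) hinj
      _ = k ^ m := by rw [Finset.card_univ, Fintype.card_fun, hk, Fintype.card_fin]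
  -- key inequality
  have key : ∀ n : ℕ, S ^ n ≤ (n * L + 1 : ℕ) := by
    intro n
    have h1 : S ^ n = ∑ f ∈ Fintype.piFinset (fun _ : Fin n => C),
        ((k : ℝ) ^ (∑ i, (f i).length))⁻¹ := by
      calc S ^ n = ∏ _i : Fin n, S := by
            rw [Finset.prod_const, Finset.card_univ, Fintype.card_fin]
        _ = ∑ f ∈ Fintype.piFinset (fun _ : Fin n => C),
              ∏ i, ((k : ℝ) ^ (f i).length)⁻¹ := by
            rw [hS, Finset.prod_univ_sum]
        _ = ∑ f ∈ Fintype.piFinset (fun _ : Fin n => C),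
              ((k : ℝ) ^ (∑ i, (f i).length))⁻¹ := by
            apply Finset.sum_congr rfl
            intro f _
            rw [Finset.prod_inv_distrib, Finset.prod_pow_eq_pow_sum]
    have hmaps : ∀ f ∈ Fintype.piFinset (fun _ : Fin n => C),
        (∑ i, (f i).length) ∈ Finset.range (n * L + 1) := by
      intro f hf
      rw [Finset.mem_range, Nat.lt_succ_iff]
      calc ∑ i, (f i).length ≤ ∑ _i : Fin n, L :=
            Finset.sum_le_sum (fun i _ => hwL _ (Fintype.mem_piFinset.mp hf i))
        _ = n * L := by rw [Finset.sum_const, Finset.card_univ, Fintype.card_fin,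
            smul_eq_mul]
    rw [h1, ← Finset.sum_fiberwise_of_maps_to hmaps]
    calc ∑ m ∈ Finset.range (n * L + 1),
          ∑ f ∈ (Fintype.piFinset (fun _ : Fin n => C)).filter
            (fun f => ∑ i, (f i).length = m), ((k : ℝ) ^ (∑ i, (f i).length))⁻¹
        ≤ ∑ _m ∈ Finset.range (n * L + 1), (1:ℝ) := by
          apply Finset.sum_le_sum
          intro m _
          have : ∑ f ∈ (Fintype.piFinset (fun _ : Fin n => C)).filter
              (fun f => ∑ i, (f i).length = m), ((k : ℝ) ^ (∑ i, (f i).length))⁻¹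
              = ((Fintype.piFinset (fun _ : Fin n => C)).filter
                (fun f => ∑ i, (f i).length = m)).card * ((k:ℝ) ^ m)⁻¹ := by
            rw [Finset.sum_congr rfl (fun f hf => by
              rw [(Finset.mem_filter.mp hf).2]), Finset.sum_const, nsmul_eq_mul]
          rw [this]
          have hcb := card_bound n m
          have : (((Fintype.piFinset (fun _ : Fin n => C)).filter
              (fun f => ∑ i, (f i).length = m)).card : ℝ) ≤ (k:ℝ) ^ m := by
            exact_mod_cast hcb
          calc (((Fintype.piFinset (fun _ : Fin n => C)).filter
              (fun f => ∑ i, (f i).length = m)).card : ℝ) * ((k:ℝ) ^ m)⁻¹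
              ≤ (k:ℝ) ^ m * ((k:ℝ) ^ m)⁻¹ := by
                apply mul_le_mul_of_nonneg_right this (by positivity)
            _ = 1 := mul_inv_cancel₀ (by positivity)
      _ = (n * L + 1 : ℕ) := by
          rw [Finset.sum_const, Finset.card_range, nsmul_eq_mul, mul_one]
  -- conclude
  by_contra hcon
  push_neg at hcon
  set ε : ℝ := S - 1 with hε
  have hε0 : 0 < ε := by simp [hε]; linarith
  set m : ℕ := ⌈(2 * L) / ε ^ 2⌉₊ + 1 with hm
  have hm0 : (0:ℝ) < m := by positivity
  have hmgt : (2 * L : ℝ) < m * ε ^ 2 := by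
    have h1 : (2 * L : ℝ) / ε ^ 2 < m := by
      rw [hm]; push_cast
      exact lt_of_le_of_lt (Nat.le_ceil _) (by linarith [Nat.lt_succ_self ⌈(2 * L) / ε ^ 2⌉₊])
    calc (2 * L : ℝ) = (2 * L) / ε ^ 2 * ε ^ 2 := by field_simp
      _ < m * ε ^ 2 := by apply mul_lt_mul_of_pos_right h1 (by positivity)
  have hber : 1 + m * ε ≤ S ^ m := by
    have := one_add_mul_le_pow (a := ε) (by linarith) m
    simpa [hε] using this
  have hkey := key (2 * m)
  have hS2m : S ^ (2 * m) = (S ^ m) ^ 2 := by rw [← pow_mul, mul_comm]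
  have hcast : ((2 * m * L + 1 : ℕ) : ℝ) = 2 * m * L + 1 := by push_cast; ring
  rw [hS2m, hcast] at hkey
  have hsq : (1 + m * ε) ^ 2 ≤ (S ^ m) ^ 2 := by
    apply pow_le_pow_left₀ (by positivity) hber
  nlinarith [hsq, hkey, hmgt, hm0, hε0, mul_pos hm0 hε0]
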